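/- Let Σ be a positive semidefinite d×d matrix, H an n×d matrix, ε > 0, and K = ΣHᵀ(HΣHᵀ + ε²I)⁻¹ the Kalman gain. Then the updated covariance (I − KH)Σ is symmetric and positive semidefinite. -/

import Mathlib

open Matrix

lemma smul_one_posDef {n : ℕ} {c : ℝ} (hc : 0 < c) :
    (c • (1 : Matrix (Fin n) (Fin n) ℝ)).PosDef := by
  refine posDef_iff_dotProduct_mulVec.mpr ⟨?_, fun x hx => ?_⟩
  · unfold Matrix.IsHermitian
    ext i j
    simp [conjTranspose, Matrix.one_apply]
  · have h1 : (c • (1 : Matrix (Fin n) (Fin n) ℝ)) *ᵥ x = c • x := by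
      simp [smul_mulVec]
    rw [h1, dotProduct_smul]
    have hpos : 0 < star x ⬝ᵥ x := dotProduct_star_self_pos_iff.mpr hx
    exact mul_pos hc hpos

lemma smul_posSemidef {n : ℕ} {c : ℝ} (hc : 0 ≤ c)
    {M : Matrix (Fin n) (Fin n) ℝ} (hM : M.PosSemidef) : (c • M).PosSemidef := by
  refine posSemidef_iff_dotProduct_mulVec.mpr ⟨?_, fun x => ?_⟩
  · unfold Matrix.IsHermitian
    rw [conjTranspose_smul, hM.1]
    simp
  rw [smul_mulVec, dotProduct_smul]
  exact mul_nonneg hc ((posSemidef_iff_dotProduct_mulVec.mp hM).2 x)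

/-- The Kalman-updated covariance `(I − KH)Σ`, with Kalman gain
`K = ΣHᵀ(HΣHᵀ + ε²I)⁻¹`, is symmetric positive semidefinite whenever `Σ` is
positive semidefinite and `ε > 0`. -/
theorem kalman_update_posSemidef
    {d n : ℕ} (S : Matrix (Fin d) (Fin d) ℝ) (hS : S.PosSemidef)
    (H : Matrix (Fin n) (Fin d) ℝ) (ε : ℝ) (hε : 0 < ε)
    (K : Matrix (Fin d) (Fin n) ℝ)
    (hK : K = S * Hᵀ * (H * S * Hᵀ + (ε ^ 2) • (1 : Matrix (Fin n) (Fin n) ℝ))⁻¹) :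
    ((1 - K * H) * S).PosSemidef := by
  set A : Matrix (Fin n) (Fin n) ℝ :=
    H * S * Hᵀ + (ε ^ 2) • (1 : Matrix (Fin n) (Fin n) ℝ) with hA
  have hCT : ∀ {a b : ℕ} (M : Matrix (Fin a) (Fin b) ℝ), Mᴴ = Mᵀ := by
    intro a b M; ext i j; simp [conjTranspose]
  have hHt : Hᵀ = Hᴴ := (hCT H).symm
  have hHSHt : (H * S * Hᵀ).PosSemidef := by
    rw [hHt]; exact hS.mul_mul_conjTranspose_same H
  have hApd : A.PosDef := Matrix.PosDef.posSemidef_add hHSHt (smul_one_posDef (by positivity))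
  have hAunit : IsUnit A.det := isUnit_iff_isUnit_det _ |>.1 hApd.isUnit
  have hKA : K * A = S * Hᵀ := by
    rw [hK, Matrix.mul_assoc, Matrix.nonsing_inv_mul A hAunit, Matrix.mul_one]
  have expand : K * (H * S * Hᵀ) + (ε ^ 2) • K = S * Hᵀ := by
    have h : K * A = K * (H * S * Hᵀ) + (ε ^ 2) • K := by
      rw [hA, Matrix.mul_add, Matrix.mul_smul, Matrix.mul_one]
    rw [← h, hKA]
  -- key: (1 - K*H) * S * Hᵀ = ε² • K
  have h2 : (1 - K * H) * S * Hᵀ = (ε ^ 2) • K := by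
    rw [Matrix.sub_mul, Matrix.one_mul, Matrix.sub_mul, Matrix.mul_assoc,
      Matrix.mul_assoc, ← Matrix.mul_assoc H S Hᵀ]
    exact sub_eq_of_eq_add' expand.symm
  -- Joseph form
  have joseph : (1 - K * H) * S
      = (1 - K * H) * S * (1 - K * H)ᵀ + (ε ^ 2) • (K * Kᵀ) := by
    have hexp : (1 - K * H) * S * (1 - K * H)ᵀ
        = (1 - K * H) * S - ((1 - K * H) * S * Hᵀ) * Kᵀ := by
      rw [transpose_sub, transpose_one, transpose_mul, Matrix.mul_sub,
        Matrix.mul_one, Matrix.mul_assoc ((1 - K * H) * S) Hᵀ Kᵀ,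
        ← Matrix.mul_assoc ((1 - K * H) * S) Hᵀ Kᵀ]
    rw [hexp, h2, Matrix.smul_mul, sub_add_cancel]
  rw [joseph]
  have p1 : ((1 - K * H) * S * (1 - K * H)ᵀ).PosSemidef := by
    have := hS.mul_mul_conjTranspose_same (1 - K * H)
    have heq : (1 - K * H)ᴴ = (1 - K * H)ᵀ := hCT _
    rwa [heq] at this
  have p2 : ((ε ^ 2) • (K * Kᵀ)).PosSemidef := by
    have := posSemidef_self_mul_conjTranspose K
    have heq : Kᴴ = Kᵀ := hCT _
    rw [heq] at this
    exact smul_posSemidef (by positivity) this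
  exact p1.add p2
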